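/- Let k, m be positive integers with gcd(k, m) = 1. Then the polynomial x^{2^k + 1} + x + 1 has no root in the finite field F_{2^m} if and only if gcd(3, m) = 1. -/

import Mathlib

open Polynomial

lemma aux_exists_root {K : Type*} [Field K] [Fintype K] (p : K[X])
    (hdeg : p.degree ≠ 0) (hdvd : p ∣ X ^ Fintype.card K - X) : ∃ a : K, p.eval a = 0 := by
  have hs : (X ^ Fintype.card K - X : K[X]).Splits := by
    have := IsSplittingField.splits (K) (X ^ Fintype.card K - X : K[X])
    simpa [Algebra.algebraMap_self] using this
  have hps := Polynomial.Splits.of_dvd hs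
    (FiniteField.X_pow_card_sub_X_ne_zero K Fintype.one_lt_card) hdvd
  obtain ⟨a, ha⟩ := Polynomial.Splits.exists_eval_eq_zero hps hdeg
  exact ⟨a, by simpa using ha⟩

lemma aux_dvd_pow {K : Type*} [Field K] (m : ℕ) (h3 : 3 ∣ m) :
    (X ^ (8:ℕ) - X : K[X]) ∣ X ^ (2^m) - X := by
  obtain ⟨t, rfl⟩ := h3
  have h7 : 7 ∣ 8 ^ t - 1 := by simpa using Nat.sub_dvd_pow_sub_pow 8 1 t
  obtain ⟨s, hs⟩ := h7
  have h8t : (1:ℕ) ≤ 8 ^ t := Nat.one_le_pow _ _ (by norm_num)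
  have hexp : 2 ^ (3 * t) = 8 ^ t := by rw [pow_mul]; norm_num
  rw [hexp]
  have e1 : (X ^ (8:ℕ) - X : K[X]) = X * (X ^ (7:ℕ) - 1) := by ring
  have epow : (X : K[X]) ^ (8 ^ t) = X * X ^ (8 ^ t - 1) := by
    rw [← pow_succ']
    congr 1
    omega
  have e2 : (X ^ (8^t) - X : K[X]) = X * ((X ^ (7:ℕ)) ^ s - 1) := by
    rw [← pow_mul, ← hs, epow]; ring
  rw [e1, e2]
  exact mul_dvd_mul_left _ (by simpa using sub_dvd_pow_sub_pow ((X:K[X])^(7:ℕ)) 1 s)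

lemma aux_pow_mod_seven {K : Type*} [Monoid K] {a : K} (h : a ^ (7:ℕ) = 1) (n : ℕ) :
    a ^ n = a ^ (n % 7) := by
  conv_lhs => rw [← Nat.div_add_mod n 7, pow_add, pow_mul, h, one_pow, one_mul]

lemma aux_two_pow_mod_seven (k : ℕ) : 2 ^ k % 7 = 2 ^ (k % 3) % 7 := by
  conv_lhs => rw [← Nat.div_add_mod k 3, pow_add, pow_mul]
  rw [Nat.mul_mod, Nat.pow_mod]
  norm_num

lemma aux_step {K : Type*} [Field K] [CharP K 2] (k : ℕ) (a b : K) (hab : a * b = b + 1) :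
    a ^ (2^k) * b ^ (2^k) = b ^ (2^k) + 1 := by
  haveI := Fact.mk Nat.prime_two
  have := congrArg (· ^ (2^k)) hab
  simp only [mul_pow] at this
  rwa [add_pow_char_pow, one_pow] at this

lemma aux_chain {K : Type*} [Field K] (h2 : (2:K) = 0) (x y z w : K)
    (hxy : y * x = x + 1) (hyz : z * y = y + 1) (hzw : w * z = z + 1) : w = x := by
  have hzx1 : z * (x + 1) = 1 := by
    linear_combination (-x) * hyz + (-z - 1) * hxy + (x*y*z - x - 1) * h2
  linear_combination (x + 1) * hzw + (1 - w) * hzx1 + h2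

/-- Let gcd(k, m) = 1. Then x^{2^k + 1} + x + 1 has no root in F_{2^m}
iff gcd(3, m) = 1. -/
theorem stmt_12 (k m : ℕ) (hk : 0 < k) (hm : 0 < m) (hgcd : Nat.gcd k m = 1)
    (K : Type*) [Field K] [Fintype K] [CharP K 2] (hcard : Fintype.card K = 2 ^ m) :
    (∀ x : K, x ^ (2 ^ k + 1) + x + 1 ≠ 0) ↔ Nat.gcd 3 m = 1 := by
  have h2 : (2 : K) = 0 := by exact_mod_cast CharP.cast_eq_zero K 2
  have h2' : (2 : K[X]) = 0 := by
    rw [← map_ofNat (Polynomial.C : K →+* K[X]) 2, h2, map_zero]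
  constructor
  · intro hno
    by_contra hne
    have h3m : 3 ∣ m :=
      not_not.mp ((Nat.Prime.coprime_iff_not_dvd (by norm_num)).not.mp hne)
    have h3k : ¬ (3 ∣ k) := fun hdk => by
      have : (3:ℕ) ∣ 1 := hgcd ▸ Nat.dvd_gcd hdk h3m
      omega
    have hkmod : k % 3 = 1 ∨ k % 3 = 2 := by omega
    rcases hkmod with hk1 | hk2
    · have hdvd : (X^(3:ℕ) + X + 1 : K[X]) ∣ X ^ Fintype.card K - X := by
        rw [hcard]
        refine dvd_trans ⟨X^(5:ℕ) + X^(3:ℕ) + X^(2:ℕ) + X, ?_⟩ (aux_dvd_pow m h3m)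
        linear_combination (-(X:K[X])^(6:ℕ) - X^(5:ℕ) - X^(4:ℕ) - X^(3:ℕ) - X^(2:ℕ) - X) * h2'
      have hdeg : (X^(3:ℕ) + X + 1 : K[X]).degree ≠ 0 := by
        have : (X^(3:ℕ) + X + 1 : K[X]).degree = 3 := by compute_degree!
        rw [this]; norm_num
      obtain ⟨a, ha⟩ := aux_exists_root _ hdeg hdvd
      simp only [eval_add, eval_pow, eval_X, eval_one] at ha
      have ha7 : a ^ (7:ℕ) = 1 := by
        linear_combination (a^4 - a^2 - a + 1) * ha + (a^2 - 1) * h2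
      refine hno a ?_
      have hmod : (2 ^ k + 1) % 7 = 3 := by
        have := aux_two_pow_mod_seven k
        rw [hk1] at this
        omega
      rw [aux_pow_mod_seven ha7 (2^k+1), hmod]
      exact ha
    · have hdvd : (X^(3:ℕ) + X^(2:ℕ) + 1 : K[X]) ∣ X ^ Fintype.card K - X := by
        rw [hcard]
        refine dvd_trans ⟨X^(5:ℕ) + X^(4:ℕ) + X^(3:ℕ) + X, ?_⟩ (aux_dvd_pow m h3m)
        linear_combination (-(X:K[X])^(7:ℕ) - X^(6:ℕ) - X^(5:ℕ) - X^(4:ℕ) - X^(3:ℕ) - X) * h2'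
      have hdeg : (X^(3:ℕ) + X^(2:ℕ) + 1 : K[X]).degree ≠ 0 := by
        have : (X^(3:ℕ) + X^(2:ℕ) + 1 : K[X]).degree = 3 := by compute_degree!
        rw [this]; norm_num
      obtain ⟨b, hb⟩ := aux_exists_root _ hdeg hdvd
      simp only [eval_add, eval_pow, eval_X, eval_one] at hb
      have hb5 : b ^ (5:ℕ) = b + 1 := by
        linear_combination (b^2 - b + 1) * hb + (-b^2 - 1) * h2
      have hb7 : b ^ (7:ℕ) = 1 := by
        linear_combination (b^4 - b^3 + b^2 - 2*b + 3) * hb + (-2*b^2 + b - 2) * h2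
      refine hno b ?_
      have hmod : (2 ^ k + 1) % 7 = 5 := by
        have := aux_two_pow_mod_seven k
        rw [hk2] at this
        omega
      rw [aux_pow_mod_seven hb7 (2^k+1), hmod, hb5]
      linear_combination (b + 1) * h2
  · intro h3m x hroot
    have hx0 : x ≠ 0 := by rintro rfl; simp at hroot
    have hxy : x ^ (2^k) * x = x + 1 := by
      rw [pow_succ] at hroot
      linear_combination hroot + (-x - 1) * h2
    have hyz := aux_step k _ _ hxy
    have hzw := aux_step k _ _ hyz
    have hwx := aux_chain h2 x (x ^ (2^k)) ((x ^ (2^k)) ^ (2^k)) (((x ^ (2^k)) ^ (2^k)) ^ (2^k))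
      hxy hyz hzw
    have h3kx : x ^ (2 ^ (3 * k)) = x := by
      have hE : 2^k * (2^k * 2^k) = 2^(3*k) := by
        rw [← pow_add, ← pow_add]; congr 1; omega
      calc x ^ (2^(3*k)) = ((x^(2^k))^(2^k))^(2^k) := by rw [← pow_mul, ← pow_mul, hE]
      _ = x := hwx
    have hmx : x ^ (2 ^ m) = x := by
      have := FiniteField.pow_card x
      rwa [hcard] at this
    have hiter : ∀ (a : ℕ), x ^ (2 ^ a) = x → ∀ u, x ^ (2 ^ (a * u)) = x := by
      intro a ha u
      induction u with
      | zero => simp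
      | succ n ih =>
        have hE : 2 ^ (a * (n + 1)) = 2 ^ (a * n) * 2 ^ a := by
          rw [Nat.mul_succ, pow_add]
        rw [hE, pow_mul, ih, ha]
    have hcop : Nat.Coprime (3 * k) m := Nat.Coprime.mul h3m hgcd
    have hx2 : x ^ (2:ℕ) = x := by
      rcases Nat.lt_or_ge 1 m with hm1 | hm1
      · obtain ⟨u, -, hu⟩ := Nat.exists_mul_mod_eq_one_of_coprime hcop hm1
        have hiterA := hiter _ h3kx u
        have hiterB := hiter _ hmx (3 * k * u / m)
        have hE : 3 * k * u = m * (3 * k * u / m) + 1 := by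
          conv_lhs => rw [← Nat.div_add_mod (3 * k * u) m]
          rw [hu]
        rw [hE, pow_succ, pow_mul, hiterB] at hiterA
        exact hiterA
      · have hmeq : m = 1 := by omega
        subst hmeq
        simpa using hmx
    have hx1 : x = 1 := by
      have h := hx2
      rw [sq] at h
      have : x * x = x * 1 := by rw [h, mul_one]
      exact mul_left_cancel₀ hx0 this
    rw [hx1] at hroot
    simp only [one_pow] at hroot
    exact one_ne_zero (by linear_combination hroot - h2 : (1:K) = 0)
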